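/- For every integer t ≥ 2, let F_t be the graph obtained from the 4t-cycle with vertices v₁, v₂, …, v_{4t} (consecutive vertices adjacent, indices mod 4t) by adding the two edges {v₁, v₃} and {v_{2t+1}, v_{2t+3}}. Then: (a) F_t is (4t−2)-chordal and has an induced cycle of length 4t−2, so the chordality of F_t equals 4t−2; and (b) the hyperbolicity of F_t equals t − 1/2, i.e., every quadruple of vertices x, y, u, v satisfies d(x,y) + d(u,v) ≤ max(d(x,u) + d(y,v), d(x,v) + d(y,u)) + (2t − 1), and the quadruple (x,y,u,v) = (v₂, v_{2t+2}, v_{t+2}, v_{3t+2}) satisfies d(x,y) + d(u,v) = max(d(x,u) + d(y,v), d(x,v) + d(y,u)) + (2t − 1). -/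

import Mathlib

/-- A graph is `k`-chordal if it has no induced cycle of length greater than `k`. -/
def IsKChordal {V : Type*} (G : SimpleGraph V) (k : ℕ) : Prop :=
  ∀ n : ℕ, 3 ≤ n → k < n → IsEmpty (SimpleGraph.cycleGraph n ↪g G)

/-- The graph `F_t`: the `4t`-cycle on vertices `v₁, …, v_{4t}` (vertex `vᵢ` is
represented by `i - 1 : ZMod (4t)`, consecutive vertices adjacent) together with
the two extra edges `{v₁, v₃} = {0, 2}` and `{v_{2t+1}, v_{2t+3}} = {2t, 2t+2}`. -/
def graphF (t : ℕ) : SimpleGraph (ZMod (4 * t)) :=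
  SimpleGraph.fromRel (fun a b =>
    b = a + 1 ∨ (a = 0 ∧ b = 2) ∨ (a = (2 * t : ℕ) ∧ b = ((2 * t + 2 : ℕ) : ZMod (4 * t))))

namespace GraphFAux
open SimpleGraph

open SimpleGraph

lemma cast_inj {t : ℕ} (ht : 2 ≤ t) {a b : ℕ} (ha : a < 4*t) (hb : b < 4*t) :
    ((a : ZMod (4*t)) = (b : ZMod (4*t))) ↔ a = b := by
  rw [ZMod.natCast_eq_natCast_iff', Nat.mod_eq_of_lt ha, Nat.mod_eq_of_lt hb]

set_option maxHeartbeats 2000000 in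
lemma adjF_iff {t : ℕ} (ht : 2 ≤ t) {a b : ℕ} (ha : a < 4*t) (hb : b < 4*t) :
    (graphF t).Adj (a : ZMod (4*t)) (b : ZMod (4*t)) ↔
      (b = a+1 ∨ a = b+1 ∨ (a = 0 ∧ b = 4*t-1) ∨ (b = 0 ∧ a = 4*t-1) ∨
       (a = 0 ∧ b = 2) ∨ (b = 0 ∧ a = 2) ∨
       (a = 2*t ∧ b = 2*t+2) ∨ (b = 2*t ∧ a = 2*t+2)) := by
  have h0 : (0:ℕ) < 4*t := by omega
  have h2 : (2:ℕ) < 4*t := by omega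
  have h2t : 2*t < 4*t := by omega
  have h2t2 : 2*t+2 < 4*t := by omega
  have hsucc : ∀ {x y : ℕ}, x < 4*t → y < 4*t →
      ((y : ZMod (4*t)) = (x : ZMod (4*t)) + 1 ↔ (y = x+1 ∨ (y = 0 ∧ x = 4*t-1))) := by
    intro x y hx hy
    have : ((x : ZMod (4*t)) + 1) = ((x+1 : ℕ) : ZMod (4*t)) := by push_cast; ring
    rw [this, ZMod.natCast_eq_natCast_iff', Nat.mod_eq_of_lt hy]
    rcases Nat.lt_or_ge (x+1) (4*t) with h | h
    · rw [Nat.mod_eq_of_lt h]; omega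
    · have hx1 : x + 1 = 4*t := by omega
      rw [hx1, Nat.mod_self]; omega
  constructor
  · rintro ⟨hne, h | h⟩
    · rcases h with h | ⟨h1, h2'⟩ | ⟨h1, h2'⟩
      · have := (hsucc ha hb).mp h; omega
      · rw [show (0 : ZMod (4*t)) = ((0:ℕ) : ZMod (4*t)) by norm_cast] at h1
        rw [show (2 : ZMod (4*t)) = ((2:ℕ) : ZMod (4*t)) by norm_cast] at h2'
        have e1 := (cast_inj ht ha h0).mp h1
        have e2 := (cast_inj ht hb h2).mp h2'
        omega
      · have e1 := (cast_inj ht ha h2t).mp h1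
        have e2 := (cast_inj ht hb h2t2).mp h2'
        omega
    · rcases h with h | ⟨h1, h2'⟩ | ⟨h1, h2'⟩
      · have := (hsucc hb ha).mp h; omega
      · rw [show (0 : ZMod (4*t)) = ((0:ℕ) : ZMod (4*t)) by norm_cast] at h1
        rw [show (2 : ZMod (4*t)) = ((2:ℕ) : ZMod (4*t)) by norm_cast] at h2'
        have e1 := (cast_inj ht hb h0).mp h1
        have e2 := (cast_inj ht ha h2).mp h2'
        omega
      · have e1 := (cast_inj ht hb h2t).mp h1
        have e2 := (cast_inj ht ha h2t2).mp h2'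
        omega
  · intro h
    have hne : (a : ZMod (4*t)) ≠ (b : ZMod (4*t)) := by
      rw [ne_eq, cast_inj ht ha hb]; omega
    refine ⟨hne, ?_⟩
    rcases h with h | h | ⟨h1, h2'⟩ | ⟨h1, h2'⟩ | ⟨h1, h2'⟩ | ⟨h1, h2'⟩ | ⟨h1, h2'⟩ | ⟨h1, h2'⟩
    · exact Or.inl (Or.inl ((hsucc ha hb).mpr (Or.inl h)))
    · exact Or.inr (Or.inl ((hsucc hb ha).mpr (Or.inl h)))
    · exact Or.inr (Or.inl ((hsucc hb ha).mpr (Or.inr ⟨h1, h2'⟩)))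
    · exact Or.inl (Or.inl ((hsucc ha hb).mpr (Or.inr ⟨h1, h2'⟩)))
    · refine Or.inl (Or.inr (Or.inl ⟨?_, ?_⟩)) <;> subst h1 <;> subst h2' <;> norm_cast
    · refine Or.inr (Or.inr (Or.inl ⟨?_, ?_⟩)) <;> subst h1 <;> subst h2' <;> norm_cast
    · exact Or.inl (Or.inr (Or.inr ⟨by rw [h1], by rw [h2']⟩))
    · exact Or.inr (Or.inr (Or.inr ⟨by rw [h1], by rw [h2']⟩))

lemma adj_succ {t : ℕ} (ht : 2 ≤ t) (x : ZMod (4*t)) : (graphF t).Adj x (x + 1) := by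
  haveI : Fact (1 < 4*t) := ⟨by omega⟩
  refine ⟨?_, Or.inl (Or.inl rfl)⟩
  intro h
  have : (1 : ZMod (4*t)) = 0 := by
    have := h.symm
    rwa [add_comm, add_eq_right] at this
  exact one_ne_zero this

lemma walk_add {t : ℕ} (ht : 2 ≤ t) (x : ZMod (4*t)) (k : ℕ) :
    ∃ p : (graphF t).Walk x (x + (k : ℕ)), p.length = k := by
  induction k with
  | zero => exact ⟨Walk.nil.copy rfl (by push_cast; ring), by simp⟩
  | succ k ih =>
    obtain ⟨p, hp⟩ := ih
    exact ⟨(p.concat (adj_succ ht _)).copy rfl (by push_cast; ring),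
      by simp [Walk.length_concat, hp]⟩

lemma dist_le_of_eq_add {t : ℕ} (ht : 2 ≤ t) {x y : ZMod (4*t)} {k : ℕ}
    (h : y = x + (k : ℕ)) : (graphF t).dist x y ≤ k := by
  obtain ⟨p, hp⟩ := walk_add ht x k
  subst h
  exact le_of_le_of_eq (dist_le p) hp

lemma connectedF {t : ℕ} (ht : 2 ≤ t) : (graphF t).Connected := by
  haveI : NeZero (4*t) := ⟨by omega⟩
  refine ⟨fun x y => ?_⟩
  obtain ⟨p, -⟩ := walk_add ht x (y - x).val
  exact ⟨p.copy rfl (by rw [ZMod.natCast_zmod_val]; ring)⟩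

lemma dist_cast_le {t : ℕ} (ht : 2 ≤ t) {a b : ℕ} (hab : a ≤ b) :
    (graphF t).dist (a : ZMod (4*t)) (b : ZMod (4*t)) ≤ b - a := by
  refine dist_le_of_eq_add ht ?_
  have : ((b - a : ℕ) : ZMod (4*t)) = (b : ZMod (4*t)) - a := by
    push_cast [Nat.cast_sub hab]; ring
  rw [this]; ring

lemma dist_cast_le' {t : ℕ} (ht : 2 ≤ t) {a b : ℕ} (hab : b ≤ a + 4*t) :
    (graphF t).dist (a : ZMod (4*t)) (b : ZMod (4*t)) ≤ a + 4*t - b := by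
  rw [SimpleGraph.dist_comm]
  refine dist_le_of_eq_add ht ?_
  have : ((a + 4*t - b : ℕ) : ZMod (4*t)) = (a : ZMod (4*t)) - b := by
    rw [Nat.cast_sub hab, Nat.cast_add, ZMod.natCast_self]; ring
  rw [this]; ring

lemma dist_le_diam {t : ℕ} (ht : 2 ≤ t) (x y : ZMod (4*t)) :
    (graphF t).dist x y ≤ 2*t := by
  haveI : NeZero (4*t) := ⟨by omega⟩
  set k := (y - x).val with hk
  have hklt : k < 4*t := ZMod.val_lt _
  have hxy : y = x + (k : ℕ) := by rw [hk, ZMod.natCast_zmod_val]; ring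
  rcases le_or_gt k (2*t) with h | h
  · exact le_trans (dist_le_of_eq_add ht hxy) h
  · rw [SimpleGraph.dist_comm]
    have hx : x = y + ((4*t - k : ℕ) : ZMod (4*t)) := by
      rw [Nat.cast_sub hklt.le, ZMod.natCast_self, hxy]; ring
    exact le_trans (dist_le_of_eq_add ht hx) (by omega)


lemma walk_lip {t : ℕ} (f : ZMod (4*t) → ℤ)
    (hf : ∀ ⦃x y : ZMod (4*t)⦄, (graphF t).Adj x y → |f x - f y| ≤ 1) :
    ∀ {x y : ZMod (4*t)} (p : (graphF t).Walk x y), |f x - f y| ≤ (p.length : ℤ) := by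
  intro x y p
  induction p with
  | nil => simp
  | @cons a b c h p ih =>
    have h1 : |f a - f b| ≤ 1 := hf h
    have h2 : |f a - f c| ≤ |f a - f b| + |f b - f c| := abs_sub_le _ _ _
    simp only [Walk.length_cons]
    push_cast
    omega

lemma dist_lip {t : ℕ} (ht : 2 ≤ t) (f : ZMod (4*t) → ℤ)
    (hf : ∀ ⦃x y : ZMod (4*t)⦄, (graphF t).Adj x y → |f x - f y| ≤ 1)
    (x y : ZMod (4*t)) : |f x - f y| ≤ ((graphF t).dist x y : ℤ) := by
  obtain ⟨p, hp⟩ := (connectedF ht).exists_walk_length_eq_dist x y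
  have := walk_lip f hf p
  rwa [hp] at this

/-- cycle-distance to vertex 1, as a function of `val`. -/
def funG (t : ℕ) : ℕ → ℤ := fun v =>
  if v = 0 then 1 else if v ≤ 2*t+1 then (v : ℤ) - 1 else 4*t+1 - v

/-- distance to vertex `t+1`, as a function of `val`. -/
def funF (t : ℕ) : ℕ → ℤ := fun v =>
  if v = 0 then (t : ℤ) else if v ≤ t+1 then (t : ℤ)+1-v else
  if v ≤ 2*t+1 then (v : ℤ)-t-1 else if v ≤ 3*t+1 then (v : ℤ)-t-2 else 5*t-v

lemma adj_val {t : ℕ} (ht : 2 ≤ t) {x y : ZMod (4*t)} (h : (graphF t).Adj x y) :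
    (y.val = x.val+1 ∨ x.val = y.val+1 ∨ (x.val = 0 ∧ y.val = 4*t-1) ∨
     (y.val = 0 ∧ x.val = 4*t-1) ∨ (x.val = 0 ∧ y.val = 2) ∨ (y.val = 0 ∧ x.val = 2) ∨
     (x.val = 2*t ∧ y.val = 2*t+2) ∨ (y.val = 2*t ∧ x.val = 2*t+2)) := by
  haveI : NeZero (4*t) := ⟨by omega⟩
  rw [← ZMod.natCast_zmod_val x, ← ZMod.natCast_zmod_val y] at h
  exact (adjF_iff ht (ZMod.val_lt x) (ZMod.val_lt y)).mp h

lemma lipG {t : ℕ} (ht : 2 ≤ t) :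
    ∀ ⦃x y : ZMod (4*t)⦄, (graphF t).Adj x y → |funG t x.val - funG t y.val| ≤ 1 := by
  intro x y h
  haveI : NeZero (4*t) := ⟨by omega⟩
  have hx := ZMod.val_lt x
  have hy := ZMod.val_lt y
  have h' := adj_val ht h
  rw [abs_le]
  unfold funG
  split_ifs <;> first | exact ‹False›.elim | omega

lemma lipF {t : ℕ} (ht : 2 ≤ t) :
    ∀ ⦃x y : ZMod (4*t)⦄, (graphF t).Adj x y → |funF t x.val - funF t y.val| ≤ 1 := by
  intro x y h
  haveI : NeZero (4*t) := ⟨by omega⟩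
  have hx := ZMod.val_lt x
  have hy := ZMod.val_lt y
  have h' := adj_val ht h
  rw [abs_le]
  unfold funF
  split_ifs <;> first | exact ‹False›.elim | omega

lemma val_cast' {t : ℕ} (ht : 2 ≤ t) {a : ℕ} (ha : a < 4*t) :
    ((a : ZMod (4*t))).val = a := by
  haveI : NeZero (4*t) := ⟨by omega⟩
  exact ZMod.val_cast_of_lt ha

lemma distG_lb {t : ℕ} (ht : 2 ≤ t) {a b : ℕ} (ha : a < 4*t) (hb : b < 4*t) :
    |funG t a - funG t b| ≤ ((graphF t).dist (a : ZMod (4*t)) (b : ZMod (4*t)) : ℤ) := by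
  have := dist_lip ht (fun z => funG t z.val) (lipG ht) (a : ZMod (4*t)) (b : ZMod (4*t))
  rwa [val_cast' ht ha, val_cast' ht hb] at this

lemma distF_lb {t : ℕ} (ht : 2 ≤ t) {a b : ℕ} (ha : a < 4*t) (hb : b < 4*t) :
    |funF t a - funF t b| ≤ ((graphF t).dist (a : ZMod (4*t)) (b : ZMod (4*t)) : ℤ) := by
  have := dist_lip ht (fun z => funF t z.val) (lipF ht) (a : ZMod (4*t)) (b : ZMod (4*t))
  rwa [val_cast' ht ha, val_cast' ht hb] at this

-- exact distances
lemma dist1 {t : ℕ} (ht : 2 ≤ t) :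
    (graphF t).dist ((1:ℕ) : ZMod (4*t)) ((2*t+1 : ℕ) : ZMod (4*t)) = 2*t := by
  have hub := dist_cast_le ht (a := 1) (b := 2*t+1) (by omega)
  have hlb := distG_lb ht (a := 1) (b := 2*t+1) (by omega) (by omega)
  rw [abs_le] at hlb
  unfold funG at hlb
  split_ifs at hlb <;> first | exact ‹False›.elim | omega

lemma dist3 {t : ℕ} (ht : 2 ≤ t) :
    (graphF t).dist ((1:ℕ) : ZMod (4*t)) ((t+1 : ℕ) : ZMod (4*t)) = t := by
  have hub := dist_cast_le ht (a := 1) (b := t+1) (by omega)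
  have hlb := distG_lb ht (a := 1) (b := t+1) (by omega) (by omega)
  rw [abs_le] at hlb
  unfold funG at hlb
  split_ifs at hlb <;> first | exact ‹False›.elim | omega

lemma dist4 {t : ℕ} (ht : 2 ≤ t) :
    (graphF t).dist ((2*t+1:ℕ) : ZMod (4*t)) ((3*t+1 : ℕ) : ZMod (4*t)) = t := by
  have hub := dist_cast_le ht (a := 2*t+1) (b := 3*t+1) (by omega)
  have hlb := distG_lb ht (a := 2*t+1) (b := 3*t+1) (by omega) (by omega)
  rw [abs_le] at hlb
  unfold funG at hlb
  split_ifs at hlb <;> first | exact ‹False›.elim | omega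

lemma dist5 {t : ℕ} (ht : 2 ≤ t) :
    (graphF t).dist ((1:ℕ) : ZMod (4*t)) ((3*t+1 : ℕ) : ZMod (4*t)) = t := by
  have hub := dist_cast_le' ht (a := 1) (b := 3*t+1) (by omega)
  have hlb := distG_lb ht (a := 1) (b := 3*t+1) (by omega) (by omega)
  rw [abs_le] at hlb
  unfold funG at hlb
  split_ifs at hlb <;> first | exact ‹False›.elim | omega

lemma dist6 {t : ℕ} (ht : 2 ≤ t) :
    (graphF t).dist ((t+1:ℕ) : ZMod (4*t)) ((2*t+1 : ℕ) : ZMod (4*t)) = t := by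
  have hub := dist_cast_le ht (a := t+1) (b := 2*t+1) (by omega)
  have hlb := distG_lb ht (a := t+1) (b := 2*t+1) (by omega) (by omega)
  rw [abs_le] at hlb
  unfold funG at hlb
  split_ifs at hlb <;> first | exact ‹False›.elim | omega

lemma adj_chord2 {t : ℕ} (ht : 2 ≤ t) :
    (graphF t).Adj ((2*t:ℕ) : ZMod (4*t)) ((2*t+2 : ℕ) : ZMod (4*t)) :=
  (adjF_iff ht (by omega) (by omega)).mpr (by omega)

lemma adj_chord1 {t : ℕ} (ht : 2 ≤ t) :
    (graphF t).Adj ((0:ℕ) : ZMod (4*t)) ((2 : ℕ) : ZMod (4*t)) :=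
  (adjF_iff ht (by omega) (by omega)).mpr (by omega)

lemma dist2 {t : ℕ} (ht : 2 ≤ t) :
    (graphF t).dist ((t+1:ℕ) : ZMod (4*t)) ((3*t+1 : ℕ) : ZMod (4*t)) = 2*t - 1 := by
  have hconn := connectedF ht
  have h1 := dist_cast_le ht (t := t) (a := t+1) (b := 2*t) (by omega)
  have h2 : (graphF t).dist ((2*t:ℕ) : ZMod (4*t)) ((2*t+2 : ℕ) : ZMod (4*t)) ≤ 1 :=
    le_of_eq (dist_eq_one_iff_adj.mpr (adj_chord2 ht))
  have h3 := dist_cast_le ht (t := t) (a := 2*t+2) (b := 3*t+1) (by omega)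
  have tri1 := hconn.dist_triangle (u := ((t+1:ℕ) : ZMod (4*t)))
    (v := ((2*t:ℕ) : ZMod (4*t))) (w := ((3*t+1:ℕ) : ZMod (4*t)))
  have tri2 := hconn.dist_triangle (u := ((2*t:ℕ) : ZMod (4*t)))
    (v := ((2*t+2:ℕ) : ZMod (4*t))) (w := ((3*t+1:ℕ) : ZMod (4*t)))
  have hlb := distF_lb ht (a := t+1) (b := 3*t+1) (by omega) (by omega)
  rw [abs_le] at hlb
  unfold funF at hlb
  split_ifs at hlb <;> first | exact ‹False›.elim | omega


lemma aux_anti {t : ℕ} (ht : 2 ≤ t) {v : ℕ} (h2 : 2 ≤ v) (hv : v ≤ 2*t) :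
    (graphF t).dist ((v:ℕ) : ZMod (4*t)) ((v + 2*t : ℕ) : ZMod (4*t)) ≤ 2*t - 1 := by
  have hconn := connectedF ht
  have h1 : (graphF t).dist ((v:ℕ) : ZMod (4*t)) ((2:ℕ) : ZMod (4*t)) ≤ v - 2 := by
    rw [SimpleGraph.dist_comm]; exact dist_cast_le ht h2
  have h2' : (graphF t).dist ((2:ℕ) : ZMod (4*t)) ((0:ℕ) : ZMod (4*t)) ≤ 1 :=
    le_of_eq (dist_eq_one_iff_adj.mpr (adj_chord1 ht).symm)
  have h3 := dist_cast_le' ht (t := t) (a := 0) (b := v + 2*t) (by omega)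
  have tri1 := hconn.dist_triangle (u := ((v:ℕ) : ZMod (4*t)))
    (v := ((2:ℕ) : ZMod (4*t))) (w := ((v + 2*t:ℕ) : ZMod (4*t)))
  have tri2 := hconn.dist_triangle (u := ((2:ℕ) : ZMod (4*t)))
    (v := ((0:ℕ) : ZMod (4*t))) (w := ((v + 2*t:ℕ) : ZMod (4*t)))
  omega

lemma dist_le_special {t : ℕ} (ht : 2 ≤ t) {x y : ZMod (4*t)}
    (h1 : ¬(x = ((1:ℕ) : ZMod (4*t)) ∧ y = ((2*t+1:ℕ) : ZMod (4*t))))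
    (h2 : ¬(x = ((2*t+1:ℕ) : ZMod (4*t)) ∧ y = ((1:ℕ) : ZMod (4*t)))) :
    (graphF t).dist x y ≤ 2*t - 1 := by
  haveI : NeZero (4*t) := ⟨by omega⟩
  set k := (y - x).val with hk
  have hklt : k < 4*t := ZMod.val_lt _
  have hxy : y = x + (k : ℕ) := by rw [hk, ZMod.natCast_zmod_val]; ring
  rcases le_or_gt k (2*t-1) with h | h
  · exact le_trans (dist_le_of_eq_add ht hxy) h
  rcases le_or_gt (2*t+1) k with h' | h'
  · rw [SimpleGraph.dist_comm]
    have hx : x = y + ((4*t - k : ℕ) : ZMod (4*t)) := by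
      rw [Nat.cast_sub hklt.le, ZMod.natCast_self, hxy]; ring
    exact le_trans (dist_le_of_eq_add ht hx) (by omega)
  have hk2t : k = 2*t := by omega
  have hvx : x = ((x.val : ℕ) : ZMod (4*t)) := (ZMod.natCast_zmod_val x).symm
  have hvlt : x.val < 4*t := ZMod.val_lt x
  have hy' : y = ((x.val + 2*t : ℕ) : ZMod (4*t)) := by
    rw [hxy, hk2t, Nat.cast_add]; rw [← hvx]
  rcases Nat.lt_or_ge x.val 2 with hv | hv
  · rcases Nat.lt_or_ge x.val 1 with hv0 | hv1
    · -- x.val = 0 : pair {0, 2t}, use aux with v = 2t reversed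
      have hx0 : x.val = 0 := by omega
      rw [SimpleGraph.dist_comm]
      have e1 : y = ((2*t : ℕ) : ZMod (4*t)) := hy'.trans (congrArg _ (by omega))
      have e2 : x = ((2*t + 2*t : ℕ) : ZMod (4*t)) := by
        rw [hvx, hx0, show (2*t + 2*t : ℕ) = 4*t from by omega, ZMod.natCast_self]; norm_cast
      rw [e1, e2]
      exact aux_anti ht (by omega) (by omega)
    · -- x.val = 1 : excluded
      have hx1 : x.val = 1 := by omega
      exact absurd ⟨by rw [hvx, hx1], hy'.trans (congrArg _ (by omega))⟩ h1
  rcases Nat.lt_or_ge x.val (2*t+1) with hv' | hv'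
  · -- 2 ≤ x.val ≤ 2t
    rw [hvx, hy']
    exact aux_anti ht hv (by omega)
  rcases Nat.lt_or_ge x.val (2*t+2) with hv'' | hv''
  · -- x.val = 2t+1 : excluded
    have hx1 : x.val = 2*t+1 := by omega
    have ey : y = ((1:ℕ) : ZMod (4*t)) := by
      rw [hy', hx1, show (2*t+1+2*t : ℕ) = 4*t + 1 from by omega, Nat.cast_add,
        ZMod.natCast_self, zero_add]
    exact absurd ⟨by rw [hvx, hx1], ey⟩ h2
  · -- 2t+2 ≤ x.val : pair reversed, w = x.val - 2t ∈ [2, 2t-1]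
    rw [SimpleGraph.dist_comm]
    have e1 : y = ((x.val - 2*t : ℕ) : ZMod (4*t)) := by
      rw [hy', show (x.val + 2*t : ℕ) = (x.val - 2*t) + 4*t from by omega, Nat.cast_add,
        ZMod.natCast_self, add_zero]
    have e2 : x = (((x.val - 2*t) + 2*t : ℕ) : ZMod (4*t)) :=
      hvx.trans (congrArg _ (by omega))
    have := aux_anti ht (t := t) (v := x.val - 2*t) (by omega) (by omega)
    rwa [← e1, ← e2] at this

lemma max_ge_pairs {t : ℕ} (ht : 2 ≤ t) (x y u v : ZMod (4*t)) :
    (graphF t).dist x y ≤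
      max ((graphF t).dist x u + (graphF t).dist y v)
        ((graphF t).dist x v + (graphF t).dist y u) ∧
    (graphF t).dist u v ≤
      max ((graphF t).dist x u + (graphF t).dist y v)
        ((graphF t).dist x v + (graphF t).dist y u) := by
  have hconn := connectedF ht
  have t1 := hconn.dist_triangle (u := x) (v := u) (w := y)
  have t2 := hconn.dist_triangle (u := x) (v := v) (w := y)
  have t3 := hconn.dist_triangle (u := u) (v := x) (w := v)
  have t4 := hconn.dist_triangle (u := u) (v := y) (w := v)
  have c1 : (graphF t).dist u y = (graphF t).dist y u := SimpleGraph.dist_comm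
  have c2 : (graphF t).dist v y = (graphF t).dist y v := SimpleGraph.dist_comm
  have c3 : (graphF t).dist u x = (graphF t).dist x u := SimpleGraph.dist_comm
  have c4 : (graphF t).dist u y = (graphF t).dist y u := SimpleGraph.dist_comm
  omega

lemma main_ineq {t : ℕ} (ht : 2 ≤ t) (x y u v : ZMod (4*t)) :
    (graphF t).dist x y + (graphF t).dist u v ≤
      max ((graphF t).dist x u + (graphF t).dist y v)
        ((graphF t).dist x v + (graphF t).dist y u) + (2*t - 1) := by
  have hmax := max_ge_pairs ht x y u v
  by_cases hA : (x = ((1:ℕ) : ZMod (4*t)) ∧ y = ((2*t+1:ℕ) : ZMod (4*t))) ∨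
      (x = ((2*t+1:ℕ) : ZMod (4*t)) ∧ y = ((1:ℕ) : ZMod (4*t)))
  · by_cases hB : (u = ((1:ℕ) : ZMod (4*t)) ∧ v = ((2*t+1:ℕ) : ZMod (4*t))) ∨
        (u = ((2*t+1:ℕ) : ZMod (4*t)) ∧ v = ((1:ℕ) : ZMod (4*t)))
    · have hd := dist1 ht
      have hcomm : (graphF t).dist ((2*t+1:ℕ) : ZMod (4*t)) ((1:ℕ) : ZMod (4*t)) =
          (graphF t).dist ((1:ℕ) : ZMod (4*t)) ((2*t+1:ℕ) : ZMod (4*t)) :=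
        SimpleGraph.dist_comm
      have hs1 : (graphF t).dist ((1:ℕ) : ZMod (4*t)) ((1:ℕ) : ZMod (4*t)) = 0 :=
        SimpleGraph.dist_self
      have hs2 : (graphF t).dist ((2*t+1:ℕ) : ZMod (4*t)) ((2*t+1:ℕ) : ZMod (4*t)) = 0 :=
        SimpleGraph.dist_self
      rcases hA with ⟨ex, ey⟩ | ⟨ex, ey⟩ <;> rcases hB with ⟨eu, ev⟩ | ⟨eu, ev⟩ <;>
        subst ex <;> subst ey <;> subst eu <;> subst ev <;> omega
    · rw [not_or] at hB
      have := dist_le_special ht hB.1 hB.2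
      omega
  · rw [not_or] at hA
    have := dist_le_special ht hA.1 hA.2
    omega


lemma mod2 {n d : ℕ} (hn : 0 < n) (hd : d < 2*n) : d % n = if d < n then d else d - n := by
  split_ifs with h
  · exact Nat.mod_eq_of_lt h
  · rw [Nat.mod_eq_sub_mod (by omega), Nat.mod_eq_of_lt (by omega)]

lemma cyc_adj_iff {m : ℕ} (hm : 3 ≤ m) (i j : Fin m) :
    (cycleGraph m).Adj i j ↔ (j.val = i.val+1 ∨ i.val = j.val+1 ∨
      (i.val = 0 ∧ j.val = m-1) ∨ (j.val = 0 ∧ i.val = m-1)) := by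
  have hi := i.isLt
  have hj := j.isLt
  rw [cycleGraph_adj']
  have h1 : (i - j).val = ((m - j.val) + i.val) % m := by rw [Fin.sub_def]
  have h2 : (j - i).val = ((m - i.val) + j.val) % m := by rw [Fin.sub_def]
  rw [h1, h2, mod2 (by omega) (by omega), mod2 (by omega) (by omega)]
  split_ifs <;> omega

lemma no_embed {t n : ℕ} (ht : 2 ≤ t) (hn : 7 ≤ n) (e : cycleGraph n ↪g graphF t)
    {z n1 n2 n3 : ZMod (4*t)}
    (h1 : (graphF t).Adj z n1) (h2 : (graphF t).Adj z n2) (h3 : (graphF t).Adj z n3)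
    (d12 : n1 ≠ n2) (d13 : n1 ≠ n3) (d23 : n2 ≠ n3)
    (hz : z ∈ Set.range e) (hm1 : n1 ∈ Set.range e) (hm2 : n2 ∈ Set.range e)
    (hm3 : n3 ∈ Set.range e) : False := by
  obtain ⟨i, rfl⟩ := hz
  obtain ⟨j1, rfl⟩ := hm1
  obtain ⟨j2, rfl⟩ := hm2
  obtain ⟨j3, rfl⟩ := hm3
  have a1 := (cyc_adj_iff (by omega) i j1).mp (e.map_rel_iff.mp h1)
  have a2 := (cyc_adj_iff (by omega) i j2).mp (e.map_rel_iff.mp h2)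
  have a3 := (cyc_adj_iff (by omega) i j3).mp (e.map_rel_iff.mp h3)
  have hne12 : j1.val ≠ j2.val := fun h => d12 (congrArg e (Fin.val_injective h))
  have hne13 : j1.val ≠ j3.val := fun h => d13 (congrArg e (Fin.val_injective h))
  have hne23 : j2.val ≠ j3.val := fun h => d23 (congrArg e (Fin.val_injective h))
  have hi := i.isLt
  have hj1 := j1.isLt
  have hj2 := j2.isLt
  have hj3 := j3.isLt
  omega

lemma chordal {t : ℕ} (ht : 2 ≤ t) : IsKChordal (graphF t) (4*t - 2) := by
  intro n hn3 hlt
  constructor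
  intro e
  haveI : NeZero (4*t) := ⟨by omega⟩
  have hinj : Function.Injective e := e.injective
  have hcard : n ≤ 4*t := by
    have := Fintype.card_le_of_injective e hinj
    simpa [ZMod.card] using this
  have hn7 : 7 ≤ n := by omega
  classical
  set S : Finset (ZMod (4*t)) := Finset.univ.image e with hS
  have hScard : S.card = n := by
    rw [hS, Finset.card_image_of_injective _ hinj, Finset.card_univ, Fintype.card_fin]
  have hrange : ∀ w : ZMod (4*t), w ∈ S → w ∈ Set.range e := by
    intro w hw
    rw [hS, Finset.mem_image] at hw
    obtain ⟨a, -, ha⟩ := hw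
    exact ⟨a, ha⟩
  have huniq : ∀ w1 w2 : ZMod (4*t), w1 ∉ S → w2 ∉ S → w1 = w2 := by
    intro w1 w2 hw1 hw2
    by_contra hne
    have hc : (insert w1 (insert w2 S)).card = n + 2 := by
      rw [Finset.card_insert_of_notMem (by simp [hne, hw1]),
        Finset.card_insert_of_notMem hw2, hScard]
    have hle := Finset.card_le_card (Finset.subset_univ (insert w1 (insert w2 S)))
    rw [hc, Finset.card_univ, ZMod.card] at hle
    omega
  by_cases hA : ((1:ℕ) : ZMod (4*t)) ∈ S ∧ ((2:ℕ) : ZMod (4*t)) ∈ S ∧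
      ((4*t-1:ℕ) : ZMod (4*t)) ∈ S ∧ ((0:ℕ) : ZMod (4*t)) ∈ S
  · exact no_embed ht hn7 e (z := ((0:ℕ) : ZMod (4*t)))
      ((adjF_iff ht (by omega) (by omega)).mpr (by omega))
      ((adjF_iff ht (by omega) (by omega)).mpr (by omega))
      ((adjF_iff ht (by omega) (by omega)).mpr (by omega))
      (by rw [ne_eq, cast_inj ht (by omega) (by omega)]; omega)
      (by rw [ne_eq, cast_inj ht (by omega) (by omega)]; omega)
      (by rw [ne_eq, cast_inj ht (by omega) (by omega)]; omega)
      (hrange _ hA.2.2.2) (hrange _ hA.1) (hrange _ hA.2.1) (hrange _ hA.2.2.1)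
  · by_cases hB : ((2*t-1:ℕ) : ZMod (4*t)) ∈ S ∧ ((2*t+1:ℕ) : ZMod (4*t)) ∈ S ∧
        ((2*t+2:ℕ) : ZMod (4*t)) ∈ S ∧ ((2*t:ℕ) : ZMod (4*t)) ∈ S
    · exact no_embed ht hn7 e (z := ((2*t:ℕ) : ZMod (4*t)))
        ((adjF_iff ht (by omega) (by omega)).mpr (by omega))
        ((adjF_iff ht (by omega) (by omega)).mpr (by omega))
        ((adjF_iff ht (by omega) (by omega)).mpr (by omega))
        (by rw [ne_eq, cast_inj ht (by omega) (by omega)]; omega)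
        (by rw [ne_eq, cast_inj ht (by omega) (by omega)]; omega)
        (by rw [ne_eq, cast_inj ht (by omega) (by omega)]; omega)
        (hrange _ hB.2.2.2) (hrange _ hB.1) (hrange _ hB.2.1) (hrange _ hB.2.2.1)
    · rw [not_and_or, not_and_or, not_and_or] at hA hB
      rcases hA with h | h | h | h <;> rcases hB with g | g | g | g <;>
        exact absurd ((cast_inj ht (by omega) (by omega)).mp (huniq _ _ h g)) (by omega)

/-- the skipping map giving the induced `(4t-2)`-cycle -/
def psi (t : ℕ) : ℕ → ℕ := fun v => if v = 0 then 0 else if v ≤ 2*t-1 then v+1 else v+2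

lemma emb_exists {t : ℕ} (ht : 2 ≤ t) : Nonempty (cycleGraph (4*t-2) ↪g graphF t) := by
  haveI : NeZero (4*t) := ⟨by omega⟩
  have hlt : ∀ v : Fin (4*t-2), psi t v.val < 4*t := by
    intro v
    have := v.isLt
    unfold psi
    split_ifs <;> omega
  refine ⟨⟨⟨fun i => ((psi t i.val : ℕ) : ZMod (4*t)), ?_⟩, ?_⟩⟩
  · intro i j hij
    have hi := i.isLt
    have hj := j.isLt
    have h := (cast_inj ht (hlt i) (hlt j)).mp hij
    apply Fin.val_injective
    unfold psi at h
    split_ifs at h <;> omega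
  · intro i j
    show (graphF t).Adj ((psi t i.val : ℕ) : ZMod (4*t)) ((psi t j.val : ℕ) : ZMod (4*t)) ↔
      (cycleGraph (4*t-2)).Adj i j
    rw [adjF_iff ht (hlt i) (hlt j), cyc_adj_iff (by omega) i j]
    have hi := i.isLt
    have hj := j.isLt
    unfold psi
    split_ifs <;>
      simp only [false_and, and_false, false_or, or_false, true_and, and_true,
        false_iff, iff_false, true_iff, iff_true, not_or] <;>
      omega

end GraphFAux

/-- For `t ≥ 2`: the chordality of `F_t` is exactly `4t - 2`, and the hyperbolicity
of `F_t` is exactly `t - 1/2`, attained at `(x,y,u,v) = (v₂, v_{2t+2}, v_{t+2}, v_{3t+2})`. -/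
theorem graphF_chordality_and_hyperbolicity (t : ℕ) (ht : 2 ≤ t) :
    -- (a) `F_t` is `(4t-2)`-chordal and has an induced cycle of length `4t-2`
    IsKChordal (graphF t) (4 * t - 2) ∧
    Nonempty (SimpleGraph.cycleGraph (4 * t - 2) ↪g graphF t) ∧
    -- (b) the hyperbolicity of `F_t` equals `t - 1/2`
    (∀ x y u v : ZMod (4 * t),
      (graphF t).dist x y + (graphF t).dist u v ≤
        max ((graphF t).dist x u + (graphF t).dist y v)
          ((graphF t).dist x v + (graphF t).dist y u) + (2 * t - 1)) ∧
    ((graphF t).dist ((1 : ℕ) : ZMod (4 * t)) ((2 * t + 1 : ℕ) : ZMod (4 * t)) +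
        (graphF t).dist ((t + 1 : ℕ) : ZMod (4 * t)) ((3 * t + 1 : ℕ) : ZMod (4 * t)) =
      max ((graphF t).dist ((1 : ℕ) : ZMod (4 * t)) ((t + 1 : ℕ) : ZMod (4 * t)) +
            (graphF t).dist ((2 * t + 1 : ℕ) : ZMod (4 * t)) ((3 * t + 1 : ℕ) : ZMod (4 * t)))
          ((graphF t).dist ((1 : ℕ) : ZMod (4 * t)) ((3 * t + 1 : ℕ) : ZMod (4 * t)) +
            (graphF t).dist ((2 * t + 1 : ℕ) : ZMod (4 * t)) ((t + 1 : ℕ) : ZMod (4 * t))) +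
        (2 * t - 1)) := by
  refine ⟨GraphFAux.chordal ht, GraphFAux.emb_exists ht,
    fun x y u v => GraphFAux.main_ineq ht x y u v, ?_⟩
  have e1 := GraphFAux.dist1 ht
  have e2 := GraphFAux.dist2 ht
  have e3 := GraphFAux.dist3 ht
  have e4 := GraphFAux.dist4 ht
  have e5 := GraphFAux.dist5 ht
  have e6 : (graphF t).dist ((2*t+1:ℕ) : ZMod (4*t)) ((t+1:ℕ) : ZMod (4*t)) = t := by
    rw [SimpleGraph.dist_comm]; exact GraphFAux.dist6 ht
  rw [e1, e2, e3, e4, e5, e6]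
  omega
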